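/- Let M ≥ 0 be an n×n operator matrix and K, J ⊆ {0,…,n-1} with N = K ∪ J. Then S(M;N) = S(M;K) + S(M;J) - S(M;K∩J) if and only if the (k,j) entries of S(M;N) vanish for all pairs (k,j) ∈ (N×N) \ ((K×K) ∪ (J×J)). -/

import Mathlib

open scoped ComplexOrder

/-- `S` is the Schur complement of the positive semidefinite matrix `M` supported on the
rows and columns in `Λ`, padded with zeros. -/
def IsSchurCompl {n : ℕ} (M : Matrix (Fin n) (Fin n) ℂ) (Λ : Set (Fin n))
    (S : Matrix (Fin n) (Fin n) ℂ) : Prop :=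
  S.PosSemidef ∧ (∀ i j, i ∉ Λ ∨ j ∉ Λ → S i j = 0) ∧ (M - S).PosSemidef ∧
    ∀ X : Matrix (Fin n) (Fin n) ℂ, X.PosSemidef → (∀ i j, i ∉ Λ ∨ j ∉ Λ → X i j = 0) →
      (M - X).PosSemidef → (S - X).PosSemidef

namespace SchurAux

open Matrix

variable {n : ℕ}

lemma quad_single (A : Matrix (Fin n) (Fin n) ℂ) (i : Fin n) :
    star (Pi.single i (1:ℂ)) ⬝ᵥ A *ᵥ Pi.single i 1 = A i i := by
  rw [← Pi.single_star, star_one, single_dotProduct, mulVec_single]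
  simp

lemma psd_diag_nonneg {A : Matrix (Fin n) (Fin n) ℂ} (hA : A.PosSemidef) (i : Fin n) :
    0 ≤ A i i := by
  have := hA.dotProduct_mulVec_nonneg (Pi.single i 1)
  rwa [quad_single] at this

lemma psd_row_eq_zero {A : Matrix (Fin n) (Fin n) ℂ} (hA : A.PosSemidef) (i : Fin n)
    (h : A i i = 0) (j : Fin n) : A i j = 0 := by
  have hcol : A *ᵥ Pi.single i 1 = 0 := by
    rw [← hA.dotProduct_mulVec_zero_iff, quad_single, h]
  have : A j i = 0 := by
    have := congrFun hcol j
    simpa [mulVec_single] using this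
  rw [← hA.1.apply i j, this, star_zero]

lemma psd_antisymm {A B : Matrix (Fin n) (Fin n) ℂ} (h1 : (A - B).PosSemidef)
    (h2 : (B - A).PosSemidef) : A = B := by
  have hz : ∀ x : Fin n → ℂ, (A - B) *ᵥ x = 0 := by
    intro x
    rw [← h1.dotProduct_mulVec_zero_iff]
    refine le_antisymm ?_ (h1.dotProduct_mulVec_nonneg x)
    have := h2.dotProduct_mulVec_nonneg x
    have heq : star x ⬝ᵥ (B - A) *ᵥ x = -(star x ⬝ᵥ (A - B) *ᵥ x) := by
      rw [sub_mulVec, sub_mulVec, dotProduct_sub, dotProduct_sub]; ring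
    rw [heq] at this
    exact neg_nonneg.mp this
  ext i j
  have := congrFun (hz (Pi.single j 1)) i
  simpa [mulVec_single, Matrix.sub_apply, sub_eq_zero] using this

lemma herm_swap {A : Matrix (Fin n) (Fin n) ℂ} (hA : A.IsHermitian) (x u : Fin n → ℂ) :
    star x ⬝ᵥ A *ᵥ u = star (star u ⬝ᵥ A *ᵥ x) := by
  rw [star_dotProduct, star_mulVec, hA.eq, dotProduct_mulVec]

lemma cinv_nonneg {c : ℂ} (h : 0 ≤ c) : 0 ≤ c⁻¹ := by
  rw [Complex.nonneg_iff] at h ⊢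
  constructor
  · rw [Complex.inv_re]; exact div_nonneg h.1 (Complex.normSq_nonneg c)
  · rw [Complex.inv_im, ← h.2]; simp

lemma quad_vecMulVec (v x : Fin n → ℂ) :
    star x ⬝ᵥ (vecMulVec v (star v)) *ᵥ x = (star x ⬝ᵥ v) * star (star x ⬝ᵥ v) := by
  simp only [dotProduct, mulVec, vecMulVec_apply, star_sum, star_mul', star_star,
    Finset.mul_sum, Finset.sum_mul, Pi.star_apply]
  rw [Finset.sum_comm]
  exact Finset.sum_congr rfl fun p _ => Finset.sum_congr rfl fun q _ => by ring

lemma rankOne_lemma {T : Matrix (Fin n) (Fin n) ℂ} (hT : T.PosSemidef) (u : Fin n → ℂ)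
    (hc : star u ⬝ᵥ T *ᵥ u ≠ 0) :
    ((star u ⬝ᵥ T *ᵥ u)⁻¹ • vecMulVec (T *ᵥ u) (star (T *ᵥ u))).PosSemidef ∧
    (T - (star u ⬝ᵥ T *ᵥ u)⁻¹ • vecMulVec (T *ᵥ u) (star (T *ᵥ u))).PosSemidef := by
  set c : ℂ := star u ⬝ᵥ T *ᵥ u with hcdef
  set v : Fin n → ℂ := T *ᵥ u with hvdef
  have hcs : star c = c := (herm_swap hT.1 u u).symm
  have hc0 : 0 ≤ c := hT.dotProduct_mulVec_nonneg u
  have hXherm : ((c⁻¹ • vecMulVec v (star v)) : Matrix (Fin n) (Fin n) ℂ).IsHermitian := by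
    ext p q
    simp only [conjTranspose_apply, Matrix.smul_apply, vecMulVec_apply, smul_eq_mul, star_mul',
      star_star, star_inv₀, hcs, Pi.star_apply]
    ring
  have hq : ∀ x : Fin n → ℂ,
      star x ⬝ᵥ (c⁻¹ • vecMulVec v (star v)) *ᵥ x
        = c⁻¹ * ((star (star u ⬝ᵥ T *ᵥ x)) * (star u ⬝ᵥ T *ᵥ x)) := by
    intro x
    rw [smul_mulVec, dotProduct_smul, quad_vecMulVec, smul_eq_mul]
    have h1 : star x ⬝ᵥ v = star (star u ⬝ᵥ T *ᵥ x) := herm_swap hT.1 x u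
    rw [h1, star_star]
  constructor
  · refine .of_dotProduct_mulVec_nonneg hXherm fun x => ?_
    rw [hq x]
    exact mul_nonneg (cinv_nonneg hc0) (star_mul_self_nonneg _)
  · refine .of_dotProduct_mulVec_nonneg (hT.1.sub hXherm) fun x => ?_
    set s : ℂ := star u ⬝ᵥ T *ᵥ x with hsdef
    have h1 : star x ⬝ᵥ T *ᵥ u = star s := herm_swap hT.1 x u
    have key : star x ⬝ᵥ (T - c⁻¹ • vecMulVec v (star v)) *ᵥ x
        = star (x - (s * c⁻¹) • u) ⬝ᵥ T *ᵥ (x - (s * c⁻¹) • u) := by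
      rw [sub_mulVec, dotProduct_sub, hq x, mulVec_sub, mulVec_smul, star_sub, star_smul,
        sub_dotProduct, dotProduct_sub, dotProduct_sub, smul_dotProduct, smul_dotProduct,
        dotProduct_smul, dotProduct_smul, smul_eq_mul, smul_eq_mul, smul_eq_mul, smul_eq_mul,
        star_mul', star_inv₀, hcs, h1, ← hcdef, ← hsdef]
      field_simp
      ring
    rw [key]
    exact hT.dotProduct_mulVec_nonneg _

/-- Key step: if the `i`-th row of `T` is supported in `A`, `0 ≤ T ≤ M`, and `S` is the
Schur complement of `M` on `A`, then `(T - S) i i = 0`. -/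
lemma diag_eq {M T S : Matrix (Fin n) (Fin n) ℂ} {A : Set (Fin n)} {i : Fin n}
    (hT : T.PosSemidef)
    (hMT : (M - T).PosSemidef)
    (hmax : ∀ X : Matrix (Fin n) (Fin n) ℂ, X.PosSemidef →
      (∀ p q, p ∉ A ∨ q ∉ A → X p q = 0) → (M - X).PosSemidef → (S - X).PosSemidef)
    (hS : S.PosSemidef)
    (hTS : (T - S).PosSemidef)
    (hrow : ∀ l, l ∉ A → T i l = 0) :
    (T - S) i i = 0 := by
  have hd1 : 0 ≤ (T - S) i i := psd_diag_nonneg hTS i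
  by_cases hii : T i i = 0
  · have hd2 : 0 ≤ S i i := psd_diag_nonneg hS i
    refine le_antisymm ?_ hd1
    have h0 : (T - S) i i = T i i - S i i := rfl
    rw [h0, hii, zero_sub]
    exact neg_nonpos.mpr hd2
  · set u : Fin n → ℂ := Pi.single i 1 with hu
    set v : Fin n → ℂ := T *ᵥ u with hv
    set c : ℂ := star u ⬝ᵥ v with hc'
    have hcq : c = T i i := by rw [hc', hv, hu]; exact quad_single T i
    have hcne : c ≠ 0 := by rw [hcq]; exact hii
    have hcc : star u ⬝ᵥ T *ᵥ u ≠ 0 := by rw [← hv, ← hc']; exact hcne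
    obtain ⟨hX1, hX2⟩ := rankOne_lemma hT u hcc
    rw [← hv, ← hc'] at hX1 hX2
    set X : Matrix (Fin n) (Fin n) ℂ := c⁻¹ • vecMulVec v (star v) with hX
    have hvp : ∀ p, v p = T p i := by
      intro p; rw [hv, hu]; simp [mulVec_single]
    have hz : ∀ r, r ∉ A → v r = 0 := by
      intro r hr
      rw [hvp r, ← hT.1.apply r i, hrow r hr, star_zero]
    have hXsupp : ∀ p q, p ∉ A ∨ q ∉ A → X p q = 0 := by
      intro p q h
      rw [hX]
      rcases h with h | h <;> simp [vecMulVec_apply, hz _ h]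
    have hMX : (M - X).PosSemidef := by
      rw [← sub_add_sub_cancel M T X]
      exact hMT.add hX2
    have hSX : (S - X).PosSemidef := hmax X hX1 hXsupp hMX
    have h5 : 0 ≤ (S - X) i i := psd_diag_nonneg hSX i
    have hXii : X i i = T i i := by
      rw [hX]
      simp only [Matrix.smul_apply, vecMulVec_apply, Pi.star_apply, smul_eq_mul, hvp i]
      rw [hT.1.apply i i, hcq]
      field_simp
    refine le_antisymm ?_ hd1
    have heq : (T - S) i i = -((S - X) i i) := by
      simp only [Matrix.sub_apply, hXii]
      ring
    rw [heq]
    exact neg_nonpos.mpr h5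

end SchurAux

/-- `S(M;K∪J) = S(M;K) + S(M;J) - S(M;K∩J)` iff the entries of `S(M;K∪J)` vanish in the
positions of `(N×N) \ ((K×K) ∪ (J×J))`, where `N = K ∪ J`. -/
theorem schur_sum_decomposition_iff_zero_entries {n : ℕ}
    (M : Matrix (Fin n) (Fin n) ℂ) (hM : M.PosSemidef)
    (K J : Set (Fin n))
    (SN SK SJ SI : Matrix (Fin n) (Fin n) ℂ)
    (hSN : IsSchurCompl M (K ∪ J) SN)
    (hSK : IsSchurCompl M K SK)
    (hSJ : IsSchurCompl M J SJ)
    (hSI : IsSchurCompl M (K ∩ J) SI) :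
    SN = SK + SJ - SI ↔
      ∀ k j : Fin n, k ∈ K ∪ J → j ∈ K ∪ J →
        ¬(k ∈ K ∧ j ∈ K) → ¬(k ∈ J ∧ j ∈ J) → SN k j = 0 := by
  open SchurAux Matrix in
  obtain ⟨hN1, hN2, hN3, hN4⟩ := hSN
  obtain ⟨hK1, hK2, hK3, hK4⟩ := hSK
  obtain ⟨hJ1, hJ2, hJ3, hJ4⟩ := hSJ
  obtain ⟨hI1, hI2, hI3, hI4⟩ := hSI
  constructor
  · rintro rfl k j hk hj hkK hkJ
    have h1 : SK k j = 0 := hK2 k j (not_and_or.mp hkK)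
    have h2 : SJ k j = 0 := hJ2 k j (not_and_or.mp hkJ)
    have h3 : SI k j = 0 := by
      refine hI2 k j ?_
      rcases not_and_or.mp hkK with h | h
      · exact Or.inl fun hm => h hm.1
      · exact Or.inr fun hm => h hm.1
    simp [Matrix.sub_apply, Matrix.add_apply, h1, h2, h3]
  · intro hz
    -- support lemmas
    have hK2' : ∀ i j, i ∉ K ∪ J ∨ j ∉ K ∪ J → SK i j = 0 := fun i j h =>
      hK2 i j (h.imp (fun hi hik => hi (Set.mem_union_left J hik))
        (fun hj hjk => hj (Set.mem_union_left J hjk)))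
    have hJ2' : ∀ i j, i ∉ K ∪ J ∨ j ∉ K ∪ J → SJ i j = 0 := fun i j h =>
      hJ2 i j (h.imp (fun hi hik => hi (Set.mem_union_right K hik))
        (fun hj hjk => hj (Set.mem_union_right K hjk)))
    have hI2K : ∀ i j, i ∉ K ∨ j ∉ K → SI i j = 0 := fun i j h =>
      hI2 i j (h.imp (fun hi hm => hi hm.1) (fun hj hm => hj hm.1))
    have hI2J : ∀ i j, i ∉ J ∨ j ∉ J → SI i j = 0 := fun i j h =>
      hI2 i j (h.imp (fun hi hm => hi hm.2) (fun hj hm => hj hm.2))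
    -- basic order relations
    have hKN : (SN - SK).PosSemidef := hN4 SK hK1 hK2' hK3
    have hJN : (SN - SJ).PosSemidef := hN4 SJ hJ1 hJ2' hJ3
    have hIK : (SK - SI).PosSemidef := hK4 SI hI1 hI2K hI3
    -- rows of SN indexed by K \ J are supported in K, and symmetrically
    have hrowK : ∀ i, i ∈ K → i ∉ J → ∀ l, l ∉ K → SN i l = 0 := by
      intro i hiK hiJ l hlK
      by_cases hlJ : l ∈ J
      · exact hz i l (Set.mem_union_left J hiK) (Set.mem_union_right K hlJ)
          (fun h => hlK h.2) (fun h => hiJ h.1)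
      · exact hN2 i l (Or.inr (fun h => ((Set.mem_union l K J).mp h).elim hlK hlJ))
    have hrowJ : ∀ i, i ∈ J → i ∉ K → ∀ l, l ∉ J → SN i l = 0 := by
      intro i hiJ hiK l hlJ
      by_cases hlK : l ∈ K
      · exact hz i l (Set.mem_union_right K hiJ) (Set.mem_union_left J hlK)
          (fun h => hiK h.1) (fun h => hlJ h.2)
      · exact hN2 i l (Or.inr (fun h => ((Set.mem_union l K J).mp h).elim hlK hlJ))
    -- SN - SK is supported on J × J
    have hDsupp : ∀ p q, p ∉ J ∨ q ∉ J → (SN - SK) p q = 0 := by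
      have hDrow : ∀ p, p ∉ J → ∀ q, (SN - SK) p q = 0 := by
        intro p hpJ q
        by_cases hpK : p ∈ K
        · have hdd : (SN - SK) p p = 0 :=
            diag_eq hN1 hN3 hK4 hK1 hKN (fun l hl => hrowK p hpK hpJ l hl)
          exact psd_row_eq_zero hKN p hdd q
        · have h1 : SN p q = 0 :=
            hN2 p q (Or.inl (fun h => ((Set.mem_union p K J).mp h).elim hpK hpJ))
          have h2 : SK p q = 0 := hK2 p q (Or.inl hpK)
          simp [Matrix.sub_apply, h1, h2]
      intro p q h
      rcases h with h | h
      · exact hDrow p h q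
      · rw [← hKN.1.apply p q, hDrow q h p, star_zero]
    -- SN - SJ is supported on K × K
    have hEsupp : ∀ p q, p ∉ K ∨ q ∉ K → (SN - SJ) p q = 0 := by
      have hErow : ∀ p, p ∉ K → ∀ q, (SN - SJ) p q = 0 := by
        intro p hpK q
        by_cases hpJ : p ∈ J
        · have hdd : (SN - SJ) p p = 0 :=
            diag_eq hN1 hN3 hJ4 hJ1 hJN (fun l hl => hrowJ p hpJ hpK l hl)
          exact psd_row_eq_zero hJN p hdd q
        · have h1 : SN p q = 0 :=
            hN2 p q (Or.inl (fun h => ((Set.mem_union p K J).mp h).elim hpK hpJ))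
          have h2 : SJ p q = 0 := hJ2 p q (Or.inl hpJ)
          simp [Matrix.sub_apply, h1, h2]
      intro p q h
      rcases h with h | h
      · exact hErow p h q
      · rw [← hJN.1.apply p q, hErow q h p, star_zero]
    -- (SN - SK) + SI ≤ SJ
    have hF3 : (M - ((SN - SK) + SI)).PosSemidef := by
      have h0 : M - ((SN - SK) + SI) = (M - SN) + (SK - SI) := by abel
      rw [h0]; exact hN3.add hIK
    have hFsupp : ∀ p q, p ∉ J ∨ q ∉ J → ((SN - SK) + SI) p q = 0 := by
      intro p q h
      rw [Matrix.add_apply, hDsupp p q h, hI2J p q h, add_zero]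
    have hG : (SJ - ((SN - SK) + SI)).PosSemidef := hJ4 _ (hKN.add hI1) hFsupp hF3
    -- SK + SJ - SN ≤ SI and SI ≤ SK + SJ - SN
    have hX2eq : SK + SJ - SN = SJ - ((SN - SK) + SI) + SI := by abel
    have hX2psd : (SK + SJ - SN).PosSemidef := by rw [hX2eq]; exact hG.add hI1
    have hrow2 : ∀ p q, p ∉ K ∩ J → (SK + SJ - SN) p q = 0 := by
      intro p q hp
      by_cases hpJ : p ∈ J
      · have hpK : p ∉ K := fun h => hp ⟨h, hpJ⟩
        have h0 : (SK + SJ - SN) p q = SK p q - (SN - SJ) p q := by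
          simp only [Matrix.sub_apply, Matrix.add_apply]; ring
        rw [h0, hK2 p q (Or.inl hpK), hEsupp p q (Or.inl hpK), sub_zero]
      · have h0 : (SK + SJ - SN) p q = SJ p q - (SN - SK) p q := by
          simp only [Matrix.sub_apply, Matrix.add_apply]; ring
        rw [h0, hJ2 p q (Or.inl hpJ), hDsupp p q (Or.inl hpJ), sub_zero]
    have hX2supp : ∀ p q, p ∉ K ∩ J ∨ q ∉ K ∩ J → (SK + SJ - SN) p q = 0 := by
      intro p q h
      rcases h with h | h
      · exact hrow2 p q h
      · rw [← hX2psd.1.apply p q, hrow2 q p h, star_zero]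
    have hMX2 : (M - (SK + SJ - SN)).PosSemidef := by
      have h0 : M - (SK + SJ - SN) = (M - SJ) + (SN - SK) := by abel
      rw [h0]; exact hJ3.add hKN
    have hfin : (SI - (SK + SJ - SN)).PosSemidef := hI4 _ hX2psd hX2supp hMX2
    have hfin2 : ((SK + SJ - SN) - SI).PosSemidef := by
      have h0 : (SK + SJ - SN) - SI = SJ - ((SN - SK) + SI) := by abel
      rw [h0]; exact hG
    have hfinal : SI = SK + SJ - SN := psd_antisymm hfin hfin2
    rw [hfinal]; abel
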